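/- If M ⊗_R N is torsion-free over R, then the natural surjection M ⊗_R N → M ⊗_S N is an isomorphism. -/
import Mathlib


set_option synthInstance.maxHeartbeats 1000000

open scoped TensorProduct

/-- Let `R` be a one-dimensional Noetherian local domain with fraction field
`K`, `S` a subring of `K` containing `R` that is finitely generated as an `R`-module, and
`M`, `N` finitely generated `S`-modules.  If `M ⊗_R N` is torsion-free over `R` (no nonzero
element is annihilated by a nonzero element of `R`), then the natural surjection
`M ⊗_R N → M ⊗_S N` is an isomorphism. -/
theorem stmt6 (R : Type*) [CommRing R] [IsDomain R] [IsNoetherianRing R] [IsLocalRing R]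
    (hdim : ringKrullDim R = 1)
    (S : Subalgebra R (FractionRing R)) (hS : Module.Finite R S)
    (M : Type*) [AddCommGroup M] [Module S M] [Module R M] [IsScalarTower R S M]
    (N : Type*) [AddCommGroup N] [Module S N] [Module R N] [IsScalarTower R S N]
    (hM : Module.Finite S M) (hN : Module.Finite S N)
    (htf : ∀ (r : R) (x : M ⊗[R] N), r • x = 0 → r = 0 ∨ x = 0)
    (f : M ⊗[R] N →+ M ⊗[S] N) (hf : ∀ (m : M) (n : N), f (m ⊗ₜ[R] n) = m ⊗ₜ[S] n) :
    Function.Bijective f := by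
  -- Key: in `M ⊗[R] N`, the `S`-actions on the two factors agree.
  have key : ∀ (s : S) (m : M) (n : N), (s • m) ⊗ₜ[R] n = m ⊗ₜ[R] (s • n) := by
    intro s m n
    obtain ⟨⟨a, b⟩, hab⟩ := IsLocalization.surj (nonZeroDivisors R) (s : FractionRing R)
    have hbs : (b : R) • s = algebraMap R S a := by
      apply Subtype.ext
      show (b : R) • (s : FractionRing R) = _
      rw [Algebra.smul_def, mul_comm]
      exact hab
    have hb0 : (b : R) ≠ 0 := nonZeroDivisors.coe_ne_zero b
    have hz : (b : R) • ((s • m) ⊗ₜ[R] n - m ⊗ₜ[R] (s • n)) = 0 := by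
      have h1 : (b : R) • ((s • m) ⊗ₜ[R] n) = (a • m) ⊗ₜ[R] n := by
        rw [TensorProduct.smul_tmul', ← smul_assoc, hbs, algebraMap_smul]
      have h2 : (b : R) • (m ⊗ₜ[R] (s • n)) = m ⊗ₜ[R] (a • n) := by
        rw [← TensorProduct.tmul_smul, ← smul_assoc, hbs, algebraMap_smul]
      rw [smul_sub, h1, h2, TensorProduct.smul_tmul a m n, sub_self]
    rcases htf _ _ hz with h | h
    · exact absurd h hb0
    · exact sub_eq_zero.mp h
  -- Inverse map.
  let b0 : M →+ N →+ M ⊗[R] N :=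
    { toFun := fun m =>
        { toFun := fun n => m ⊗ₜ[R] n
          map_zero' := TensorProduct.tmul_zero _ m
          map_add' := fun n₁ n₂ => TensorProduct.tmul_add m n₁ n₂ }
      map_zero' := by ext n; exact TensorProduct.zero_tmul _ n
      map_add' := fun m₁ m₂ => by ext n; exact TensorProduct.add_tmul m₁ m₂ n }
  let g : M ⊗[S] N →+ M ⊗[R] N :=
    TensorProduct.liftAddHom b0 (fun s m n => key s m n)
  have hg : ∀ (m : M) (n : N), g (m ⊗ₜ[S] n) = m ⊗ₜ[R] n := fun m n => rfl
  have hgf : Function.LeftInverse g f := by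
    intro x
    induction x using TensorProduct.induction_on with
    | zero => simp
    | tmul m n => rw [hf, hg]
    | add x y hx hy => rw [map_add, map_add, hx, hy]
  have hfg : Function.RightInverse g f := by
    intro y
    induction y using TensorProduct.induction_on with
    | zero => simp
    | tmul m n => rw [hg, hf]
    | add x y hx hy => rw [map_add, map_add, hx, hy]
  exact ⟨hgf.injective, hfg.surjective⟩
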